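/- Let (A,↘,↗,↖,↙) be a finite-dimensional quadri-algebra with associated horizontal dendriform algebra (A,≻,≺), and let r ∈ A⊗A be skew-symmetric. Then r, viewed as a linear map A* → A, satisfies r(a*)≻r(b*) = r((R_↗*+R_↖*)(r(a*))b* − L_↙*(r(b*))a*) and r(a*)≺r(b*) = r(−R_↗*(r(a*))b* + (L_↘*+L_↙*)(r(b*))a*) for all a*,b* ∈ A* if and only if r satisfies the two equations r₁₃≻r₂₃ = r₂₃↗r₁₂ + r₂₃↖r₁₂ + r₁₂↙r₁₃ and r₁₃≺r₂₃ = −r₂₃↗r₁₂ − r₁₂↘r₁₃ − r₁₂↙r₁₃. -/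
import Mathlib


open TensorProduct LinearMap Module

/-- Quadri-algebra axioms for the four products ↘ (`dse`), ↗ (`dne`), ↖ (`dnw`), ↙ (`dsw`). -/
def IsQuadri {K A : Type*} [Field K] [AddCommGroup A] [Module K A]
    (dse dne dnw dsw : A →ₗ[K] A →ₗ[K] A) : Prop :=
  (∀ x y z : A, dnw (dnw x y) z = dnw x (dse y z + dne y z + dnw y z + dsw y z)) ∧
  (∀ x y z : A, dnw (dne x y) z = dne x (dnw y z + dsw y z)) ∧
  (∀ x y z : A, dne (dne x y + dnw x y) z = dne x (dne y z + dse y z)) ∧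
  (∀ x y z : A, dnw (dsw x y) z = dsw x (dne y z + dnw y z)) ∧
  (∀ x y z : A, dnw (dse x y) z = dse x (dnw y z)) ∧
  (∀ x y z : A, dne (dse x y + dsw x y) z = dse x (dne y z)) ∧
  (∀ x y z : A, dsw (dnw x y + dsw x y) z = dsw x (dse y z + dsw y z)) ∧
  (∀ x y z : A, dsw (dne x y + dse x y) z = dse x (dsw y z)) ∧
  (∀ x y z : A, dse (dse x y + dne x y + dnw x y + dsw x y) z = dse x (dse y z))

/-- `r₁₂ ∘ r₁₃` for `r ∈ A ⊗ A`: `Σ (aᵢ ∘ aⱼ) ⊗ bᵢ ⊗ bⱼ`. -/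
noncomputable def tprod12_13 {K A : Type*} [Field K] [AddCommGroup A] [Module K A]
    (m : A →ₗ[K] A →ₗ[K] A) (r : A ⊗[K] A) : A ⊗[K] (A ⊗[K] A) :=
  (TensorProduct.map (TensorProduct.lift m) LinearMap.id)
    ((TensorProduct.tensorTensorTensorComm K A A A A) (r ⊗ₜ[K] r))

/-- `r₁₃ ∘ r₂₃` for `r ∈ A ⊗ A`: `Σ aᵢ ⊗ aⱼ ⊗ (bᵢ ∘ bⱼ)`. -/
noncomputable def tprod13_23 {K A : Type*} [Field K] [AddCommGroup A] [Module K A]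
    (m : A →ₗ[K] A →ₗ[K] A) (r : A ⊗[K] A) : A ⊗[K] (A ⊗[K] A) :=
  (TensorProduct.assoc K A A A)
    ((TensorProduct.map LinearMap.id (TensorProduct.lift m))
      ((TensorProduct.tensorTensorTensorComm K A A A A) (r ⊗ₜ[K] r)))

/-- `r₂₃ ∘ r₁₂` for `r ∈ A ⊗ A`: `Σ aᵢ ⊗ (aⱼ ∘ bᵢ) ⊗ bⱼ`. -/
noncomputable def tprod23_12 {K A : Type*} [Field K] [AddCommGroup A] [Module K A]
    (m : A →ₗ[K] A →ₗ[K] A) (r : A ⊗[K] A) : A ⊗[K] (A ⊗[K] A) :=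
  (TensorProduct.map LinearMap.id (TensorProduct.comm K A A).toLinearMap)
    ((TensorProduct.assoc K A A A)
      ((TensorProduct.map LinearMap.id (TensorProduct.lift m))
        ((TensorProduct.tensorTensorTensorComm K A A A A)
          ((TensorProduct.map (TensorProduct.comm K A A).toLinearMap LinearMap.id)
            ((TensorProduct.tensorTensorTensorComm K A A A A) (r ⊗ₜ[K] r))))))

/-- The linear map `A* → A` induced by `r ∈ A ⊗ A`, `v* ↦ Σ ⟨v*, bᵢ⟩ aᵢ`. -/
noncomputable def rmap (K A : Type*) [Field K] [AddCommGroup A] [Module K A] :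
    A ⊗[K] A →ₗ[K] Module.Dual K A →ₗ[K] A :=
  (dualTensorHom K (Module.Dual K A) A) ∘ₗ
    (TensorProduct.map (Module.Dual.eval K A) LinearMap.id) ∘ₗ
    (TensorProduct.comm K A A).toLinearMap

/-- Dualization `ρ ↦ ρ*` of an action `ρ : A →ₗ End A`, via transpose:
`⟨ρ*(x) a*, y⟩ = ⟨a*, ρ(x) y⟩`. -/
noncomputable def dualize {K A : Type*} [Field K] [AddCommGroup A] [Module K A]
    (ρ : A →ₗ[K] A →ₗ[K] A) :
    A →ₗ[K] Module.Dual K A →ₗ[K] Module.Dual K A :=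
  (Module.Dual.transpose (R := K)) ∘ₗ ρ


section Aux
variable {K A : Type*} [Field K] [AddCommGroup A] [Module K A]

variable {K A : Type*} [Field K] [AddCommGroup A] [Module K A]

noncomputable def qcontr (a b : Module.Dual K A) : A ⊗[K] (A ⊗[K] A) →ₗ[K] A :=
  (TensorProduct.lid K A).toLinearMap ∘ₗ
    (TensorProduct.map LinearMap.id (TensorProduct.lid K A).toLinearMap) ∘ₗ
    (TensorProduct.map a (TensorProduct.map b LinearMap.id))

@[simp] lemma qcontr_tmul (a b : Module.Dual K A) (x y z : A) :
    qcontr a b (x ⊗ₜ[K] (y ⊗ₜ[K] z)) = a x • b y • z := by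
  simp [qcontr, smul_comm (b y) (a x)]

lemma qkey [FiniteDimensional K A] (a b c : Module.Dual K A) (t : A ⊗[K] (A ⊗[K] A)) :
    (TensorProduct.dualDistribEquiv K A (A ⊗[K] A))
      (a ⊗ₜ ((TensorProduct.dualDistribEquiv K A A) (b ⊗ₜ c))) t
    = c (qcontr a b t) := by
  induction t using TensorProduct.induction_on with
  | zero => simp
  | tmul x w =>
    induction w using TensorProduct.induction_on with
    | zero => simp
    | tmul y z =>
      simp [dualDistribEquiv, dualDistribEquivOfBasis, mul_comm, mul_assoc, mul_left_comm]
    | add u v hu hv => simp only [tmul_add, map_add, hu, hv]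
  | add u v hu hv => simp only [map_add, hu, hv]

lemma qcontr_inj [FiniteDimensional K A] {t : A ⊗[K] (A ⊗[K] A)}
    (h : ∀ a b : Module.Dual K A, qcontr a b t = 0) : t = 0 := by
  rw [← Module.forall_dual_apply_eq_zero_iff K t]
  intro φ
  obtain ⟨ψ, rfl⟩ := (TensorProduct.dualDistribEquiv K A (A ⊗[K] A)).surjective φ
  induction ψ using TensorProduct.induction_on with
  | zero => rw [map_zero]; rfl
  | add x y hx hy => rw [map_add, LinearMap.add_apply, hx, hy, add_zero]
  | tmul a χ =>
    obtain ⟨ξ, rfl⟩ := (TensorProduct.dualDistribEquiv K A A).surjective χ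
    induction ξ using TensorProduct.induction_on with
    | zero => rw [map_zero, tmul_zero, map_zero]; rfl
    | tmul b c => rw [qkey, h a b, map_zero]
    | add u v hu hv =>
      rw [map_add, tmul_add, map_add, LinearMap.add_apply, hu, hv, add_zero]

variable (dse dne dnw dsw m : A →ₗ[K] A →ₗ[K] A)

/-- Bilinear version of `tprod13_23`. -/
noncomputable def tp13 (r s : A ⊗[K] A) : A ⊗[K] (A ⊗[K] A) :=
  (TensorProduct.assoc K A A A)
    ((TensorProduct.map LinearMap.id (TensorProduct.lift m))
      ((TensorProduct.tensorTensorTensorComm K A A A A) (r ⊗ₜ[K] s)))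

/-- Bilinear version of `tprod12_13`. -/
noncomputable def tp12 (r s : A ⊗[K] A) : A ⊗[K] (A ⊗[K] A) :=
  (TensorProduct.map (TensorProduct.lift m) LinearMap.id)
    ((TensorProduct.tensorTensorTensorComm K A A A A) (r ⊗ₜ[K] s))

/-- Bilinear version of `tprod23_12`. -/
noncomputable def tp23 (r s : A ⊗[K] A) : A ⊗[K] (A ⊗[K] A) :=
  (TensorProduct.map LinearMap.id (TensorProduct.comm K A A).toLinearMap)
    ((TensorProduct.assoc K A A A)
      ((TensorProduct.map LinearMap.id (TensorProduct.lift m))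
        ((TensorProduct.tensorTensorTensorComm K A A A A)
          ((TensorProduct.map (TensorProduct.comm K A A).toLinearMap LinearMap.id)
            ((TensorProduct.tensorTensorTensorComm K A A A A) (r ⊗ₜ[K] s))))))

lemma tprod13_23_eq (r : A ⊗[K] A) : tprod13_23 m r = tp13 m r r := rfl
lemma tprod12_13_eq (r : A ⊗[K] A) : tprod12_13 m r = tp12 m r r := rfl
lemma tprod23_12_eq (r : A ⊗[K] A) : tprod23_12 m r = tp23 m r r := rfl

@[simp] lemma rmap_tmul (x y : A) (a : Module.Dual K A) :
    rmap K A (x ⊗ₜ[K] y) a = a y • x := by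
  simp [rmap]

lemma dualize_apply (ρ : A →ₗ[K] A →ₗ[K] A) (x : A) (a : Module.Dual K A) (y : A) :
    dualize ρ x a y = a (ρ x y) := rfl

lemma qcontr_tp13 (a b : Module.Dual K A) (r s : A ⊗[K] A) :
    qcontr a b (tp13 m r s)
      = m (rmap K A ((TensorProduct.comm K A A) r) a)
          (rmap K A ((TensorProduct.comm K A A) s) b) := by
  induction r using TensorProduct.induction_on with
  | zero => simp [tp13]
  | add r1 r2 h1 h2 => simp only [tp13, add_tmul, map_add, LinearMap.map_add,
      LinearMap.add_apply] at *; rw [h1, h2]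
  | tmul x y =>
    induction s using TensorProduct.induction_on with
    | zero => simp [tp13]
    | add s1 s2 h1 h2 => simp only [tp13, tmul_add, map_add, LinearMap.map_add,
        LinearMap.add_apply] at *; rw [h1, h2]
    | tmul u v =>
      simp [tp13, tensorTensorTensorComm_tmul, smul_comm (b u) (a x)]

lemma qcontr_tp12 (a b : Module.Dual K A) (r s : A ⊗[K] A) :
    qcontr a b (tp12 m r s)
      = rmap K A ((TensorProduct.comm K A A) s) (dualize m (rmap K A r b) a) := by
  induction r using TensorProduct.induction_on with
  | zero => simp [tp12]
  | add r1 r2 h1 h2 => simp only [tp12, add_tmul, map_add, LinearMap.map_add,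
      LinearMap.add_apply] at *; rw [h1, h2]
  | tmul x y =>
    induction s using TensorProduct.induction_on with
    | zero => simp [tp12]
    | add s1 s2 h1 h2 => simp only [tp12, tmul_add, map_add, LinearMap.map_add,
        LinearMap.add_apply] at *; rw [h1, h2]
    | tmul u v =>
      simp [tp12, tensorTensorTensorComm_tmul, dualize, Dual.transpose,
        smul_comm (b y) (a (m x u))]

lemma qcontr_tp23 (a b : Module.Dual K A) (r s : A ⊗[K] A) :
    qcontr a b (tp23 m r s)
      = rmap K A ((TensorProduct.comm K A A) r)
          (dualize m.flip (rmap K A ((TensorProduct.comm K A A) s) a) b) := by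
  induction r using TensorProduct.induction_on with
  | zero => simp [tp23]
  | add r1 r2 h1 h2 => simp only [tp23, add_tmul, map_add, LinearMap.map_add,
      LinearMap.add_apply] at *; rw [h1, h2]
  | tmul x y =>
    induction s using TensorProduct.induction_on with
    | zero => simp [tp23]
    | add s1 s2 h1 h2 => simp only [tp23, tmul_add, map_add, LinearMap.map_add,
        LinearMap.add_apply] at *; rw [h1, h2]
    | tmul u v =>
      simp [tp23, tensorTensorTensorComm_tmul, dualize, Dual.transpose,
        smul_comm (b (m x v)) (a u)]

end Aux

/-- Proposition 3.4.13: for a skew-symmetric `r ∈ A ⊗ A` over a finite-dimensional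
quadri-algebra `(A, ↘, ↗, ↖, ↙)` with associated horizontal dendriform algebra
`(A, ≻, ≺)` (`≻ = ↗ + ↘`, `≺ = ↖ + ↙`), `r` is an `O`-operator of `(A, ≻, ≺)`
associated to `(R_↗* + R_↖*, −L_↙*, −R_↗*, L_↘* + L_↙*, A*)` if and only if `r`
satisfies equations (3.4.17) and (3.4.18). -/
theorem quadri_Ooperator_iff_tensor_equations
    {K A : Type*} [Field K] [CharZero K] [AddCommGroup A] [Module K A]
    [FiniteDimensional K A]
    (dse dne dnw dsw : A →ₗ[K] A →ₗ[K] A)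
    (hq : IsQuadri dse dne dnw dsw)
    (r : A ⊗[K] A)
    (hskew : (TensorProduct.comm K A A) r = - r) :
    ((∀ a b : Module.Dual K A,
        (dne + dse) (rmap K A r a) (rmap K A r b) =
          rmap K A r (dualize (dne.flip + dnw.flip) (rmap K A r a) b
            - dualize dsw (rmap K A r b) a)) ∧
     (∀ a b : Module.Dual K A,
        (dnw + dsw) (rmap K A r a) (rmap K A r b) =
          rmap K A r (- dualize dne.flip (rmap K A r a) b
            + dualize (dse + dsw) (rmap K A r b) a))) ↔
    ((tprod13_23 (dne + dse) r
        = tprod23_12 dne r + tprod23_12 dnw r + tprod12_13 dsw r) ∧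
     (tprod13_23 (dnw + dsw) r
        = - tprod23_12 dne r - tprod12_13 dse r - tprod12_13 dsw r)) := by
  clear hq
  have hdadd : ∀ ρ ρ' : A →ₗ[K] A →ₗ[K] A,
      dualize (ρ + ρ') = dualize ρ + dualize ρ' := by
    intro ρ ρ'; ext x a y; simp [dualize, Dual.transpose]
  have C13 : ∀ (m : A →ₗ[K] A →ₗ[K] A) (a b : Module.Dual K A),
      qcontr a b (tprod13_23 m r) = m (rmap K A r a) (rmap K A r b) := by
    intro m a b
    rw [tprod13_23_eq, qcontr_tp13, hskew]
    simp
  have C23 : ∀ (m : A →ₗ[K] A →ₗ[K] A) (a b : Module.Dual K A),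
      qcontr a b (tprod23_12 m r) = rmap K A r (dualize m.flip (rmap K A r a) b) := by
    intro m a b
    rw [tprod23_12_eq, qcontr_tp23, hskew]
    simp
  have C12 : ∀ (m : A →ₗ[K] A →ₗ[K] A) (a b : Module.Dual K A),
      qcontr a b (tprod12_13 m r) = - rmap K A r (dualize m (rmap K A r b) a) := by
    intro m a b
    rw [tprod12_13_eq, qcontr_tp12, hskew]
    simp
  constructor
  · rintro ⟨h1, h2⟩
    constructor
    · rw [← sub_eq_zero]
      apply qcontr_inj
      intro a b
      rw [map_sub, map_add, map_add, C13, C23, C23, C12, h1 a b, hdadd, map_sub]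
      simp only [LinearMap.add_apply, map_add]
      abel
    · rw [← sub_eq_zero]
      apply qcontr_inj
      intro a b
      rw [map_sub, map_sub, map_sub, map_neg, C13, C23, C12, C12, h2 a b, hdadd, map_add]
      simp only [LinearMap.add_apply, map_add, map_neg]
      abel
  · rintro ⟨h1, h2⟩
    constructor
    · intro a b
      have := congrArg (qcontr a b) h1
      simp only [map_add, C13, C23, C12, LinearMap.add_apply] at this
      rw [hdadd, map_sub]
      simp only [LinearMap.add_apply, map_add]
      rw [this]; abel
    · intro a b
      have := congrArg (qcontr a b) h2
      simp only [map_sub, map_neg, C13, C23, C12, LinearMap.add_apply] at this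
      rw [hdadd, map_add]
      simp only [LinearMap.add_apply, map_add, map_neg]
      rw [this]; abel
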